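/- The number of Motzkin-type prefixes of length n ending at height m, with s colors for matched up-down pairs (not counting colorings of the m unmatched up-steps), equals M_{n,m,s} = sum_{i≥0} ((m+1)/(n+1)) * (n+1)! / ((i+m+1)! * i! * (n-2i-m)!) * s^i. -/

import Mathlib

/-- The partial sum of the first `k` steps of a walk `w`. -/
def psum {n : ℕ} (w : Fin n → ℤ) (k : ℕ) : ℤ :=
  ∑ j ∈ Finset.univ.filter (fun j : Fin n => (j : ℕ) < k), w j

/-- `B j m` is the number of `±1`-step paths of length `j` from height `0` to height `m`
that never go below the x-axis (the Ballot-problem count). -/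
noncomputable def B (j m : ℕ) : ℕ :=
  Nat.card {w : Fin j → ℤ //
    (∀ t, w t = 1 ∨ w t = -1) ∧
    (∀ k, k ≤ j → 0 ≤ psum w k) ∧
    psum w j = (m : ℤ)}

/-- The number of Motzkin-type prefixes of length `n` ending at height `m`, with `s`
colors for matched up-down pairs (and unmatched up-steps uncolored), namely
`M_{n,m,s} = ∑ₖ (n choose k) * s^((n-k-m)/2) * B_{n-k,m}`, equals the multinomial formula
`∑ᵢ (m+1) * n! / ((i+m+1)! * i! * (n-2i-m)!) * s^i`
(where `(m+1)/(n+1) * (n+1)! = (m+1) * n!`). -/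
def wext {n : ℕ} (w : Fin n → ℤ) (i : ℕ) : ℤ :=
  if h : i < n then w ⟨i, h⟩ else 0

lemma psum_eq {n : ℕ} (w : Fin n → ℤ) (k : ℕ) (hk : k ≤ n) :
    psum w k = ∑ i ∈ Finset.range k, wext w i := by
  rw [psum, Finset.sum_filter]
  have h1 : (∑ a : Fin n, if (a : ℕ) < k then w a else 0)
      = ∑ a : Fin n, (fun i : ℕ => if i < k then wext w i else 0) (a : ℕ) := by
    refine Finset.sum_congr rfl (fun a _ => ?_)
    simp [wext, a.isLt]
  rw [h1, Fin.sum_univ_eq_sum_range (fun i : ℕ => if i < k then wext w i else 0) n,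
    ← Finset.sum_subset (Finset.range_subset_range.2 hk)]
  · exact Finset.sum_congr rfl (fun i hi => if_pos (Finset.mem_range.1 hi))
  · intro i _ hi
    rw [if_neg (by simpa using hi)]

def IsPath {j : ℕ} (m : ℕ) (w : Fin j → ℤ) : Prop :=
  (∀ t, w t = 1 ∨ w t = -1) ∧ (∀ k, k ≤ j → 0 ≤ psum w k) ∧ psum w j = (m : ℤ)

lemma B_eq_card (j m : ℕ) : B j m = Nat.card {w : Fin j → ℤ // IsPath m w} := rfl

instance pathFinite (j m : ℕ) : Finite {w : Fin j → ℤ // IsPath m w} := by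
  apply Finite.of_injective (fun w : {w : Fin j → ℤ // IsPath m w} =>
    (fun t => decide (w.1 t = 1) : Fin j → Bool))
  intro w w' h
  ext t
  have h1 := w.2.1 t
  have h2 := w'.2.1 t
  have := congrFun h t
  simp only [decide_eq_decide] at this
  rcases h1 with h1 | h1 <;> rcases h2 with h2 | h2 <;> simp [h1, h2] at this ⊢

lemma wext_snoc_lt {j : ℕ} (v : Fin j → ℤ) (x : ℤ) (i : ℕ) (hi : i < j) :
    wext (Fin.snoc v x) i = wext v i := by
  simp only [wext, dif_pos hi, dif_pos (Nat.lt_succ_of_lt hi)]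
  have : (⟨i, Nat.lt_succ_of_lt hi⟩ : Fin (j+1)) = Fin.castSucc ⟨i, hi⟩ := rfl
  rw [this, Fin.snoc_castSucc]

lemma wext_snoc_last {j : ℕ} (v : Fin j → ℤ) (x : ℤ) :
    wext (Fin.snoc v x) j = x := by
  simp only [wext, dif_pos (Nat.lt_succ_self j)]
  have : (⟨j, Nat.lt_succ_self j⟩ : Fin (j+1)) = Fin.last j := rfl
  rw [this, Fin.snoc_last]

lemma psum_snoc_le {j : ℕ} (v : Fin j → ℤ) (x : ℤ) (k : ℕ) (hk : k ≤ j) :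
    psum (Fin.snoc v x) k = psum v k := by
  rw [psum_eq _ k (Nat.le_succ_of_le hk), psum_eq v k hk]
  exact Finset.sum_congr rfl fun i hi =>
    wext_snoc_lt v x i (lt_of_lt_of_le (Finset.mem_range.1 hi) hk)

lemma psum_snoc_succ {j : ℕ} (v : Fin j → ℤ) (x : ℤ) :
    psum (Fin.snoc v x) (j+1) = psum v j + x := by
  rw [psum_eq _ (j+1) le_rfl, Finset.sum_range_succ, wext_snoc_last,
    ← psum_snoc_le v x j le_rfl, psum_eq _ j (Nat.le_succ j)]

lemma psum_zero' {n : ℕ} (w : Fin n → ℤ) : psum w 0 = 0 := by simp [psum]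

lemma psum_init_le {j : ℕ} (w : Fin (j+1) → ℤ) (k : ℕ) (hk : k ≤ j) :
    psum (Fin.init w) k = psum w k := by
  conv_rhs => rw [← Fin.snoc_init_self w]
  rw [psum_snoc_le _ _ k hk]

lemma psum_last {j : ℕ} (w : Fin (j+1) → ℤ) :
    psum w (j+1) = psum (Fin.init w) j + w (Fin.last j) := by
  conv_lhs => rw [← Fin.snoc_init_self w]
  rw [psum_snoc_succ]

lemma snoc_steps {j : ℕ} {v : Fin j → ℤ} (hv : ∀ t, v t = 1 ∨ v t = -1) (x : ℤ)
    (hx : x = 1 ∨ x = -1) :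
    ∀ t, (Fin.snoc v x : Fin (j+1) → ℤ) t = 1 ∨ (Fin.snoc v x : Fin (j+1) → ℤ) t = -1 := by
  intro t
  refine Fin.lastCases ?_ ?_ t
  · rwa [Fin.snoc_last]
  · intro i; rw [Fin.snoc_castSucc]; exact hv i

lemma init_isPath {j m : ℕ} {w : Fin (j+1) → ℤ} (hw : IsPath m w) {m' : ℕ}
    (hend : psum (Fin.init w) j = (m' : ℤ)) : IsPath m' (Fin.init w) := by
  refine ⟨fun t => hw.1 t.castSucc, fun k hk => ?_, hend⟩
  rw [psum_init_le w k hk]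
  exact hw.2.1 k (Nat.le_succ_of_le hk)

lemma snoc_isPath {j m : ℕ} {v : Fin j → ℤ} (hv : IsPath m v) (x : ℤ)
    (hx : x = 1 ∨ x = -1) (hnn : 0 ≤ (m : ℤ) + x) :
    IsPath ((m : ℤ) + x).toNat (Fin.snoc v x) := by
  refine ⟨snoc_steps hv.1 x hx, fun k hk => ?_, ?_⟩
  · by_cases h : k ≤ j
    · rw [psum_snoc_le v x k h]
      exact hv.2.1 k h
    · have hk1 : k = j + 1 := by omega
      subst hk1
      rw [psum_snoc_succ, hv.2.2]
      exact hnn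
  · rw [psum_snoc_succ, hv.2.2, Int.toNat_of_nonneg hnn]

lemma end_init {j m : ℕ} {w : Fin (j+1) → ℤ} (hw : IsPath m w) :
    psum (Fin.init w) j = (m : ℤ) - w (Fin.last j) := by
  have := psum_last w
  rw [hw.2.2] at this
  omega

lemma snoc_isPath' {j m : ℕ} {v : Fin j → ℤ} (hv : IsPath m v) (x : ℤ)
    (hx : x = 1 ∨ x = -1) (m' : ℕ) (hm' : (m' : ℤ) = (m : ℤ) + x) :
    IsPath m' (Fin.snoc v x) := by
  refine ⟨snoc_steps hv.1 x hx, fun k hk => ?_, ?_⟩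
  · by_cases h : k ≤ j
    · rw [psum_snoc_le v x k h]
      exact hv.2.1 k h
    · have hk1 : k = j + 1 := by omega
      subst hk1
      rw [psum_snoc_succ, hv.2.2, ← hm']
      positivity
  · rw [psum_snoc_succ, hv.2.2, ← hm']

lemma last_neg {j : ℕ} {w : Fin (j+1) → ℤ} (hw : IsPath 0 w) :
    w (Fin.last j) = -1 := by
  have hnn : 0 ≤ psum (Fin.init w) j := by
    rw [psum_init_le w j le_rfl]; exact hw.2.1 j (Nat.le_succ j)
  have he := end_init hw
  rcases hw.1 (Fin.last j) with hx | hx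
  · rw [he, hx] at hnn; norm_num at hnn
  · exact hx

noncomputable def pathEquivSucc (j m : ℕ) :
    {w : Fin (j+1) → ℤ // IsPath (m+1) w} ≃
    {v : Fin j → ℤ // IsPath m v} ⊕ {v : Fin j → ℤ // IsPath (m+2) v} where
  toFun w :=
    if h : w.1 (Fin.last j) = 1 then
      Sum.inl ⟨Fin.init w.1, init_isPath w.2 (by rw [end_init w.2, h]; push_cast; ring)⟩
    else
      Sum.inr ⟨Fin.init w.1, init_isPath w.2 (by
        have hx := (w.2.1 (Fin.last j)).resolve_left h
        rw [end_init w.2, hx]; push_cast; ring)⟩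
  invFun v :=
    match v with
    | Sum.inl v => ⟨Fin.snoc v.1 1, snoc_isPath' v.2 1 (Or.inl rfl) (m+1) (by push_cast; ring)⟩
    | Sum.inr v => ⟨Fin.snoc v.1 (-1), snoc_isPath' v.2 (-1) (Or.inr rfl) (m+1) (by push_cast; ring)⟩
  left_inv w := by
    by_cases h : w.1 (Fin.last j) = 1
    · simp only [dif_pos h]
      refine Subtype.ext ?_
      conv_rhs => rw [← Fin.snoc_init_self w.1, h]
    · simp only [dif_neg h]
      have hx := (w.2.1 (Fin.last j)).resolve_left h
      refine Subtype.ext ?_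
      conv_rhs => rw [← Fin.snoc_init_self w.1, hx]
  right_inv v := by
    match v with
    | Sum.inl v =>
      have h : (Fin.snoc v.1 1 : Fin (j+1) → ℤ) (Fin.last j) = 1 := Fin.snoc_last _ _
      simp only [dif_pos h]
      refine congrArg Sum.inl (Subtype.ext ?_)
      simp
    | Sum.inr v =>
      have h : ¬ (Fin.snoc v.1 (-1) : Fin (j+1) → ℤ) (Fin.last j) = 1 := by
        rw [Fin.snoc_last]; omega
      simp only [dif_neg h]
      refine congrArg Sum.inr (Subtype.ext ?_)
      simp

noncomputable def pathEquivZero (j : ℕ) :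
    {w : Fin (j+1) → ℤ // IsPath 0 w} ≃ {v : Fin j → ℤ // IsPath 1 v} where
  toFun w := ⟨Fin.init w.1, init_isPath w.2 (by rw [end_init w.2, last_neg w.2]; norm_num)⟩
  invFun v := ⟨Fin.snoc v.1 (-1), snoc_isPath' v.2 (-1) (Or.inr rfl) 0 (by norm_num)⟩
  left_inv w := by
    refine Subtype.ext ?_
    conv_rhs => rw [← Fin.snoc_init_self w.1, last_neg w.2]
  right_inv v := by
    refine Subtype.ext ?_
    simp

lemma B_succ_pos (j m : ℕ) : B (j+1) (m+1) = B j m + B j (m+2) := by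
  rw [B_eq_card, B_eq_card, B_eq_card, Nat.card_congr (pathEquivSucc j m), Nat.card_sum]

lemma B_succ_zero (j : ℕ) : B (j+1) 0 = B j 1 := by
  rw [B_eq_card, B_eq_card, Nat.card_congr (pathEquivZero j)]

lemma B_zero (m : ℕ) : B 0 m = if m = 0 then 1 else 0 := by
  by_cases hm : m = 0
  · subst hm
    rw [if_pos rfl, B_eq_card]
    have hall : ∀ w : Fin 0 → ℤ, IsPath 0 w := fun w =>
      ⟨fun t => t.elim0, fun k hk => by rw [Nat.le_zero.1 hk, psum_zero'], by rw [psum_zero']; rfl⟩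
    have : Unique {w : Fin 0 → ℤ // IsPath 0 w} :=
      ⟨⟨⟨fun t => t.elim0, hall _⟩⟩, fun w => Subtype.ext (Subsingleton.elim _ _)⟩
    exact Nat.card_unique
  · rw [if_neg hm, B_eq_card]
    have : IsEmpty {w : Fin 0 → ℤ // IsPath m w} := by
      refine ⟨fun w => hm ?_⟩
      have := w.2.2.2
      rw [psum_zero'] at this
      exact_mod_cast this.symm
    exact Nat.card_of_isEmpty

def Npath : ℕ → ℕ → ℕ
  | 0, m => if m = 0 then 1 else 0
  | (j+1), 0 => Npath j 1
  | (j+1), (m+1) => Npath j m + Npath j (m+2)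

lemma B_eq_Npath (j : ℕ) : ∀ m, B j m = Npath j m := by
  induction j with
  | zero => intro m; rw [B_zero]; rfl
  | succ j ih =>
    intro m
    cases m with
    | zero => rw [B_succ_zero, ih, Npath]
    | succ m => rw [B_succ_pos, ih, ih, Npath]

def F (j m : ℕ) : ℕ :=
  if m ≤ j ∧ (j - m) % 2 = 0 then
    Nat.choose j ((j - m) / 2) - Nat.choose j ((j - m) / 2 + m + 1)
  else 0

lemma choose_pair {n k l : ℕ} (h : k + l = n + 1) (hl : l ≤ k) :
    n.choose k ≤ n.choose l := by
  by_cases hk : k ≤ n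
  · have hl1 : 1 ≤ l := by omega
    have hsymm : n.choose k = n.choose (l - 1) := by
      rw [← Nat.choose_symm hk]
      congr 1
      omega
    rw [hsymm]
    have : l - 1 < n / 2 ∨ l - 1 = l - 1 := Or.inr rfl
    rcases Nat.lt_or_ge (l - 1) (n / 2) with h2 | h2
    · have := Nat.choose_le_succ_of_lt_half_left h2
      have hll : l - 1 + 1 = l := by omega
      rwa [hll] at this
    · -- l - 1 ≥ n/2; since 2l ≤ n+1, l-1 ≥ n/2 forces l-1 = n/2 with n = 2l-1 or 2l-2
      have : l - 1 = l ∨ l - 1 + 1 = l := by omega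
      -- if l-1 ≥ n/2 and 2l ≤ n+1 then 2(l-1) ≥ 2(n/2) ≥ n-1, so 2l ≥ n+1, so 2l = n+1, n odd,
      have hk2 : k = l := by omega
      rw [hk2] at hsymm
      exact le_of_eq hsymm.symm
  · rw [Nat.choose_eq_zero_of_lt (by omega)]
    exact Nat.zero_le _

lemma Npath_eq_F (j : ℕ) : ∀ m, Npath j m = F j m := by
  induction j with
  | zero =>
    intro m
    cases m with
    | zero => simp [Npath, F]
    | succ m => simp [Npath, F]
  | succ j ih =>
    intro m
    cases m with
    | zero =>
      rw [show Npath (j+1) 0 = Npath j 1 from rfl, ih]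
      by_cases hj : j % 2 = 1
      · have ha : (j + 1 - 0) / 2 = (j - 1) / 2 + 1 := by omega
        rw [F, F, if_pos ⟨by omega, by omega⟩, if_pos ⟨by omega, by omega⟩, ha]
        set a := (j - 1) / 2 with ha2
        have p1 : (j+1).choose (a+1) = j.choose a + j.choose (a+1) := Nat.choose_succ_succ j a
        have p2 : (j+1).choose (a+2) = j.choose (a+1) + j.choose (a+2) :=
          Nat.choose_succ_succ j (a+1)
        have ineq : j.choose (a+2) ≤ j.choose a := choose_pair (by omega) (by omega)
        have e1 : a + 1 + 0 + 1 = a + 2 := by omega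
        have e2 : a + 1 + 1 = a + 2 := by omega
        rw [e1, e2, p1, p2]
        omega
      · rw [F, F, if_neg (by omega), if_neg (by omega)]
    | succ m =>
      rw [show Npath (j+1) (m+1) = Npath j m + Npath j (m+2) from rfl, ih, ih]
      by_cases hc : m ≤ j ∧ (j - m) % 2 = 0
      · by_cases hij : m + 2 ≤ j
        · have hi1 : 1 ≤ (j - m) / 2 := by omega
          set i := (j - m) / 2 with hidef
          obtain ⟨b, hb⟩ : ∃ b, i = b + 1 := ⟨i - 1, by omega⟩
          have e1 : (j + 1 - (m+1)) / 2 = i := by omega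
          have e2 : (j - (m+2)) / 2 = b := by omega
          rw [F, F, F, if_pos ⟨by omega, by omega⟩, if_pos ⟨by omega, by omega⟩,
            if_pos ⟨by omega, by omega⟩, e1, e2]
          have p1 : (j+1).choose i = j.choose b + j.choose i := by
            rw [hb]; exact Nat.choose_succ_succ j b
          have p2 : (j+1).choose (i + (m+1) + 1) = j.choose (i+m+1) + j.choose (i+m+2) := by
            have : i + (m+1) + 1 = (i + m + 1) + 1 := by omega
            rw [this]; exact Nat.choose_succ_succ j (i+m+1)
          have hj2 : j = m + 2 * i := by omega
          have ineq1 : j.choose (i + m + 1) ≤ j.choose i := choose_pair (by omega) (by omega)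
          have ineq2 : j.choose (i + m + 2) ≤ j.choose b := choose_pair (by omega) (by omega)
          have e3 : i + m + 1 = i + m + 1 := rfl
          have e4 : b + (m + 2) + 1 = i + m + 2 := by omega
          rw [e4, p1, p2]
          rw [← hidef]
          omega
        · have hjm : j = m := by omega
          subst hjm
          rw [F, F, F, if_pos ⟨by omega, by omega⟩, if_neg (by omega),
            if_pos ⟨by omega, by omega⟩]
          have e1 : (j + 1 - (j + 1)) / 2 = 0 := by omega
          have e2 : (j - j) / 2 = 0 := by omega
          rw [e1, e2]
          simp [Nat.choose_eq_zero_of_lt]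
      · rw [F, F, F, if_neg (by omega), if_neg (by omega), if_neg (by omega)]

lemma B_closed (i m : ℕ) :
    B (m + 2*i) m = (m + 2*i).choose i - (m + 2*i).choose (i + m + 1) := by
  rw [B_eq_Npath, Npath_eq_F, F, if_pos ⟨by omega, by omega⟩]
  have e : (m + 2*i - m) / 2 = i := by omega
  rw [e]

lemma B_vanish (j m : ℕ) (h : ¬(m ≤ j ∧ (j - m) % 2 = 0)) : B j m = 0 := by
  rw [B_eq_Npath, Npath_eq_F, F, if_neg h]

lemma ballot_fact (i m : ℕ) :
    ((m + 2*i).choose i - (m + 2*i).choose (i + m + 1)) *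
      ((i + m + 1).factorial * i.factorial) = (m + 1) * (m + 2*i).factorial := by
  set j := m + 2*i with hj
  have e1 : j.choose i * i.factorial * (j - i).factorial = j.factorial :=
    Nat.choose_mul_factorial_mul_factorial (by omega)
  have hji : j - i = m + i := by omega
  rw [hji] at e1
  have e1' : j.choose i * ((i + m + 1).factorial * i.factorial) = (m + i + 1) * j.factorial := by
    calc j.choose i * ((i + m + 1).factorial * i.factorial)
        = ((m + i) + 1) * (j.choose i * i.factorial * (m + i).factorial) := by
          rw [show i + m + 1 = (m + i) + 1 from by omega, Nat.factorial_succ]; ring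
      _ = (m + i + 1) * j.factorial := by rw [e1]
  have e2' : j.choose (i + m + 1) * ((i + m + 1).factorial * i.factorial) = i * j.factorial := by
    by_cases hi : 1 ≤ i
    · have e2 : j.choose (i + m + 1) * (i + m + 1).factorial * (j - (i + m + 1)).factorial
          = j.factorial := Nat.choose_mul_factorial_mul_factorial (by omega)
      have h2 : j - (i + m + 1) = i - 1 := by omega
      rw [h2] at e2
      have hfi : i.factorial = i * (i - 1).factorial := by
        conv_lhs => rw [show i = (i - 1) + 1 from by omega]
        rw [Nat.factorial_succ]
        congr 1
        omega
      calc j.choose (i + m + 1) * ((i + m + 1).factorial * i.factorial)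
          = i * (j.choose (i + m + 1) * (i + m + 1).factorial * (i - 1).factorial) := by
            rw [hfi]; ring
        _ = i * j.factorial := by rw [e2]
    · have hi0 : i = 0 := by omega
      subst hi0
      rw [Nat.choose_eq_zero_of_lt (by omega)]
      simp
  rw [Nat.sub_mul, e1', e2', ← Nat.sub_mul, show m + i + 1 - i = m + 1 from by omega]

lemma term_eq (n m i : ℕ) (h2 : m + 2*i ≤ n) :
    n.choose (m + 2*i) * ((m + 2*i).choose i - (m + 2*i).choose (i + m + 1)) =
      (m + 1) * n.factorial /
        ((i + m + 1).factorial * i.factorial * (n - 2*i - m).factorial) := by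
  symm
  apply Nat.div_eq_of_eq_mul_left
  · exact Nat.mul_pos (Nat.mul_pos (Nat.factorial_pos _) (Nat.factorial_pos _))
      (Nat.factorial_pos _)
  · have key := ballot_fact i m
    have e : n.choose (m + 2*i) * (m + 2*i).factorial * (n - (m + 2*i)).factorial
        = n.factorial := Nat.choose_mul_factorial_mul_factorial h2
    have hsub : n - 2*i - m = n - (m + 2*i) := by omega
    rw [hsub]
    calc (m + 1) * n.factorial
        = (m + 1) * (n.choose (m + 2*i) * (m + 2*i).factorial * (n - (m + 2*i)).factorial) := by
          rw [e]
      _ = n.choose (m + 2*i) * ((m + 1) * (m + 2*i).factorial) * (n - (m + 2*i)).factorial := by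
          ring
      _ = n.choose (m + 2*i) * (((m + 2*i).choose i - (m + 2*i).choose (i + m + 1)) *
            ((i + m + 1).factorial * i.factorial)) * (n - (m + 2*i)).factorial := by rw [key]
      _ = _ := by ring


theorem colored_motzkin_prefix_count (n m s : ℕ) (hm : m ≤ n) :
    ∑ k ∈ Finset.range (n - m + 1), n.choose k * s ^ ((n - k - m) / 2) * B (n - k) m =
    ∑ i ∈ Finset.range ((n - m) / 2 + 1),
      (m + 1) * n.factorial /
        ((i + m + 1).factorial * i.factorial * (n - 2 * i - m).factorial) * s ^ i := by
  rw [← Finset.sum_filter_add_sum_filter_not (Finset.range (n - m + 1))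
    (fun k => (n - m - k) % 2 = 0)]
  have hz : ∑ k ∈ (Finset.range (n - m + 1)).filter (fun k => ¬(n - m - k) % 2 = 0),
      n.choose k * s ^ ((n - k - m) / 2) * B (n - k) m = 0 := by
    refine Finset.sum_eq_zero fun k hk => ?_
    simp only [Finset.mem_filter, Finset.mem_range] at hk
    rw [B_vanish (n - k) m (by omega), mul_zero]
  rw [hz, add_zero]
  refine Finset.sum_bij' (fun k _ => (n - m - k) / 2) (fun i _ => n - m - 2*i)
    ?_ ?_ ?_ ?_ ?_
  · intro k hk
    simp only [Finset.mem_filter, Finset.mem_range] at hk ⊢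
    omega
  · intro i hi
    simp only [Finset.mem_filter, Finset.mem_range] at hi ⊢
    omega
  · intro k hk
    simp only [Finset.mem_filter, Finset.mem_range] at hk
    omega
  · intro i hi
    simp only [Finset.mem_range] at hi
    omega
  · intro k hk
    simp only [Finset.mem_filter, Finset.mem_range] at hk
    set i := (n - m - k) / 2 with hidef
    have h1 : n - k = m + 2*i := by omega
    have h2 : (n - k - m) / 2 = i := by omega
    have h3 : k = n - (m + 2*i) := by omega
    rw [h2, h1, B_closed, h3, Nat.choose_symm (by omega), ← term_eq n m i (by omega)]
    ring
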